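/- Consider n ≥ 1 asynchronous nodes with activation-time sequences s_i : ℕ → ℝ (i = 1,…,n) that are strictly increasing with s_i(m+1) − s_i(m) ≥ τ̲ for all m, where τ̲ > 0, and assume all activation times are pairwise distinct. Let t : ℕ → ℝ be the strictly increasing enumeration of the union of all activation times. Then for all p ≤ q in ℕ, q − p + 1 ≤ n·(⌊(t(q) − t(p))/τ̲⌋ + 1). In particular, if a message sent at time t(p) is received within delay at most τ > 0 (i.e., by time t(p) + τ), then fewer than n·(⌊τ/τ̲⌋ + 1) global activation events can occur in the merged sequence between the sending time and the reception time. -/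
import Mathlib


/-- **Counting estimate underlying Lemma 1(b) of the paper.** Consider `n ≥ 1`
asynchronous nodes with strictly increasing activation-time sequences `s i` whose
consecutive gaps are at least `τl > 0`, all activation times pairwise distinct,
and let `t` be the strictly increasing enumeration of the union of all activation
times. Then for all `p ≤ q`, `q − p + 1 ≤ n·(⌊(t q − t p)/τl⌋ + 1)`. In particular,
if a message sent at time `t p` is received by time `t p + τ` (with `τ > 0`), then
fewer than `n·(⌊τ/τl⌋ + 1)` global activation events occur in the merged sequence
between the sending time and the reception time. -/
theorem merged_event_counting (n : ℕ) (hn : 1 ≤ n) (s : Fin n → ℕ → ℝ)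
    (τl : ℝ) (hτl : 0 < τl)
    (hmono : ∀ i, StrictMono (s i))
    (hgap : ∀ i m, τl ≤ s i (m + 1) - s i m)
    (hdist : ∀ i m j l, s i m = s j l → i = j ∧ m = l)
    (t : ℕ → ℝ) (ht : StrictMono t)
    (hrange : Set.range t = ⋃ i, Set.range (s i))
    (τ : ℝ) (hτ : 0 < τ) :
    (∀ p q : ℕ, p ≤ q → q - p + 1 ≤ n * (⌊(t q - t p) / τl⌋₊ + 1)) ∧
    (∀ p q : ℕ, p ≤ q → t q ≤ t p + τ → q - p < n * (⌊τ / τl⌋₊ + 1)) := by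
  -- choose node and index for each merged event
  have hex : ∀ k : ℕ, ∃ i m, s i m = t k := by
    intro k
    have hk : t k ∈ Set.range t := ⟨k, rfl⟩
    rw [hrange] at hk
    obtain ⟨S, ⟨i, rfl⟩, m, hm⟩ := hk
    exact ⟨i, m, hm⟩
  choose g h hgh using hex
  -- accumulated gap bound
  have acc : ∀ (i : Fin n) (a b : ℕ), a ≤ b → ((b - a : ℕ) : ℝ) * τl ≤ s i b - s i a := by
    intro i a b hab
    induction b, hab using Nat.le_induction with
    | base => simp
    | succ b hab ih =>
      have h1 : b + 1 - a = (b - a) + 1 := by omega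
      rw [h1]
      push_cast
      have := hgap i b
      nlinarith
  have key : ∀ p q : ℕ, p ≤ q → q - p + 1 ≤ n * (⌊(t q - t p) / τl⌋₊ + 1) := by
    intro p q hpq
    set K := ⌊(t q - t p) / τl⌋₊ with hK
    -- fiber counting
    have hcard : (Finset.Icc p q).card =
        ∑ i : Fin n, ((Finset.Icc p q).filter (fun k => g k = i)).card := by
      apply Finset.card_eq_sum_card_fiberwise
      intro x _; exact Finset.mem_univ _
    have hfiber : ∀ i : Fin n, ((Finset.Icc p q).filter (fun k => g k = i)).card ≤ K + 1 := by
      intro i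
      set F := (Finset.Icc p q).filter (fun k => g k = i) with hF
      rcases F.eq_empty_or_nonempty with he | hne
      · simp [he]
      -- h injective on F
      have hinj : Set.InjOn h F := by
        intro k₁ hk₁ k₂ hk₂ hkk
        have hg₁ : g k₁ = i := (Finset.mem_filter.mp hk₁).2
        have hg₂ : g k₂ = i := (Finset.mem_filter.mp hk₂).2
        have : t k₁ = t k₂ := by
          rw [← hgh k₁, ← hgh k₂, hg₁, hg₂, hkk]
        exact ht.injective this
      have hcardF : F.card = (F.image h).card := (Finset.card_image_of_injOn hinj).symm
      -- min and max of the image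
      have hneI : (F.image h).Nonempty := hne.image h
      set m₀ := (F.image h).min' hneI
      set m₁ := (F.image h).max' hneI
      have hsub : F.image h ⊆ Finset.Icc m₀ m₁ := by
        intro m hm
        exact Finset.mem_Icc.mpr ⟨Finset.min'_le _ _ hm, Finset.le_max' _ _ hm⟩
      have hbound : ∀ m ∈ F.image h, t p ≤ s i m ∧ s i m ≤ t q := by
        intro m hm
        obtain ⟨k, hk, rfl⟩ := Finset.mem_image.mp hm
        have hg : g k = i := (Finset.mem_filter.mp hk).2
        have hkIcc := Finset.mem_Icc.mp (Finset.mem_filter.mp hk).1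
        have : s i (h k) = t k := by rw [← hg]; exact hgh k
        rw [this]
        exact ⟨ht.monotone hkIcc.1, ht.monotone hkIcc.2⟩
      have hm₀ := hbound m₀ (Finset.min'_mem _ _)
      have hm₁ := hbound m₁ (Finset.max'_mem _ _)
      have hm01 : m₀ ≤ m₁ := Finset.min'_le _ _ (Finset.max'_mem _ _)
      have hdiff : m₁ - m₀ ≤ K := by
        rw [hK]
        apply Nat.le_floor
        rw [le_div_iff₀ hτl]
        have := acc i m₀ m₁ hm01
        nlinarith [hm₀.1, hm₁.2]
      calc F.card = (F.image h).card := hcardF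
        _ ≤ (Finset.Icc m₀ m₁).card := Finset.card_le_card hsub
        _ = m₁ - m₀ + 1 := by rw [Nat.card_Icc]; omega
        _ ≤ K + 1 := by omega
    have : (Finset.Icc p q).card ≤ n * (K + 1) := by
      rw [hcard]
      calc ∑ i : Fin n, ((Finset.Icc p q).filter (fun k => g k = i)).card
          ≤ ∑ _i : Fin n, (K + 1) := Finset.sum_le_sum fun i _ => hfiber i
        _ = n * (K + 1) := by simp [Finset.sum_const, mul_comm]
    rw [Nat.card_Icc] at this
    omega
  refine ⟨key, fun p q hpq hle => ?_⟩
  have h1 := key p q hpq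
  have h2 : ⌊(t q - t p) / τl⌋₊ ≤ ⌊τ / τl⌋₊ := by
    apply Nat.floor_le_floor
    exact div_le_div_of_nonneg_right (by linarith) hτl.le
  have : n * (⌊(t q - t p) / τl⌋₊ + 1) ≤ n * (⌊τ / τl⌋₊ + 1) :=
    Nat.mul_le_mul_left n (by omega)
  omega
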